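/- For every cotransverse map f : [n] → [n] and every x ∈ [0,1]^n, there exists a permutation τ of {1,…,n} (depending on x) such that T(f)(x)_i = x_{τ(i)} for all 1 ≤ i ≤ n; in other words, T(f)(x) is a rearrangement of the coordinates of x. -/

import Mathlib

open scoped ENNReal

instance : Fact ((0:ℝ) ≤ 1) := ⟨zero_le_one⟩

/- The directed metric `d⃗₁` on the vertices `{0,1}^n`. -/
open Classical in
noncomputable def vd {n : ℕ} (x y : Fin n → Bool) : ℝ≥0∞ :=
  if x ≤ y then ∑ i, (if x i = y i then 0 else 1) else ⊤

def Cotransverse {m n : ℕ} (f : (Fin m → Bool) → (Fin n → Bool)) : Prop :=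
  StrictMono f ∧ ∀ x y, vd x y = 1 → vd (f x) (f y) = 1

/-- The topologized map `T(f) : [0,1]^m → [0,1]^n` associated with a map
`f : {0,1}^m → {0,1}^n`, defined coordinatewise by the max-min (sup-inf)
formula, the sup and inf being taken in the complete lattice `[0,1]`
(so `sup ∅ = 0` and `inf ∅ = 1`). -/
noncomputable def Tmap {m n : ℕ} (f : (Fin m → Bool) → (Fin n → Bool))
    (x : Fin m → unitInterval) : Fin n → unitInterval :=
  fun i => ⨆ (ε : Fin m → Bool) (_ : f ε i = true), ⨅ (k : Fin m) (_ : ε k = true), x k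

/-- weight: number of `true` coordinates -/
def wt {n : ℕ} (ε : Fin n → Bool) : ℕ := (Finset.univ.filter fun i => ε i = true).card

lemma vd_eq_one_iff {n : ℕ} (x y : Fin n → Bool) :
    vd x y = 1 ↔ x ≤ y ∧ (Finset.univ.filter fun i => ¬ x i = y i).card = 1 := by
  classical
  unfold vd
  split_ifs with h
  · have hsum : (∑ i, (if x i = y i then (0:ℝ≥0∞) else 1))
        = ((Finset.univ.filter fun i => ¬ x i = y i).card : ℝ≥0∞) := by
      rw [← Finset.sum_boole]
      exact Finset.sum_congr rfl fun i _ => by by_cases hi : x i = y i <;> simp [hi]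
    rw [hsum]
    simp [h, Nat.cast_eq_one]
  · simp [h]

lemma wt_add_of_le {n : ℕ} {a b : Fin n → Bool} (hab : a ≤ b) :
    wt b = wt a + (Finset.univ.filter fun i => ¬ a i = b i).card := by
  classical
  unfold wt
  rw [← Finset.card_union_of_disjoint]
  · congr 1
    ext i
    have hib := hab i
    simp only [Finset.mem_union, Finset.mem_filter, Finset.mem_univ, true_and]
    cases hai : a i <;> cases hbi : b i
    · simp
    · simp
    · rw [hai, hbi] at hib; simp [Bool.le_iff_imp] at hib
    · simp
  · rw [Finset.disjoint_filter]
    intro i _ hai hne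
    have hib := hab i
    rw [hai] at hib hne
    cases hbi : b i
    · rw [hbi] at hib; simp [Bool.le_iff_imp] at hib
    · rw [hbi] at hne; exact hne rfl

lemma wt_f_eq_of_cot {n : ℕ} {f : (Fin n → Bool) → (Fin n → Bool)} (hf : Cotransverse f) :
    ∀ ε, wt (f ε) = wt ε := by
  classical
  -- first, the shifted version
  have key : ∀ m (ε : Fin n → Bool), wt ε = m → wt (f ε) = m + wt (f (fun _ => false)) := by
    intro m
    induction m with
    | zero =>
      intro ε hε
      have : ε = fun _ => false := by
        funext i
        by_contra hi
        have hi' : ε i = true := by cases h : ε i <;> simp_all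
        have : i ∈ Finset.univ.filter fun j => ε j = true := by simp [hi']
        simp only [wt, Finset.card_eq_zero] at hε
        rw [hε] at this
        exact absurd this (Finset.notMem_empty i)
      rw [this, Nat.zero_add]
    | succ m ih =>
      intro ε hε
      have hpos : 0 < (Finset.univ.filter fun i => ε i = true).card := by
        unfold wt at hε; omega
      obtain ⟨i, hi⟩ := Finset.card_pos.mp hpos
      have hi' : ε i = true := (Finset.mem_filter.mp hi).2
      set ε' : Fin n → Bool := Function.update ε i false with hε'
      have hle : ε' ≤ ε := by
        intro j
        by_cases hj : j = i
        · subst hj; simp [hε', Function.update_self]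
        · simp [hε', Function.update_of_ne hj, le_refl]
      have hdiff : (Finset.univ.filter fun j => ¬ ε' j = ε j) = {i} := by
        ext j
        by_cases hj : j = i
        · subst hj; simp [hε', Function.update_self, hi']
        · simp [hε', Function.update_of_ne hj, hj]
      have hvd : vd ε' ε = 1 := (vd_eq_one_iff ε' ε).mpr ⟨hle, by rw [hdiff]; simp⟩
      have hwt : wt ε = wt ε' + 1 := by
        rw [wt_add_of_le hle, hdiff]; simp
      have hε'm : wt ε' = m := by omega
      have hvdf := hf.2 _ _ hvd
      obtain ⟨hlef, hcardf⟩ := (vd_eq_one_iff _ _).mp hvdf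
      have : wt (f ε) = wt (f ε') + 1 := by rw [wt_add_of_le hlef, hcardf]
      rw [this, ih ε' hε'm]
      omega
  have htop : wt (fun _ : Fin n => true) = n := by
    unfold wt; simp
  have hle_n : ∀ ε : Fin n → Bool, wt ε ≤ n := by
    intro ε
    unfold wt
    calc (Finset.univ.filter fun i => ε i = true).card ≤ Finset.univ.card :=
          Finset.card_filter_le _ _
      _ = n := by simp
  have hc0 : wt (f (fun _ => false)) = 0 := by
    have h1 := key n (fun _ => true) htop
    have h2 := hle_n (f (fun _ => true))
    omega
  intro ε
  have := key (wt ε) ε rfl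
  omega

lemma f_top_eq {n : ℕ} {f : (Fin n → Bool) → (Fin n → Bool)} (hf : Cotransverse f) :
    f (fun _ => true) = fun _ => true := by
  classical
  have h := wt_f_eq_of_cot hf (fun _ => true)
  have htop : wt (fun _ : Fin n => true) = n := by unfold wt; simp
  rw [htop] at h
  have : (Finset.univ.filter fun i => f (fun _ => true) i = true) = Finset.univ := by
    apply Finset.eq_univ_of_card
    rw [Fintype.card_fin]
    exact h
  funext i
  have : i ∈ Finset.univ.filter fun i => f (fun _ => true) i = true := by
    rw [this]; exact Finset.mem_univ i
  exact (Finset.mem_filter.mp this).2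

open Classical in
lemma thresh {n : ℕ} {f : (Fin n → Bool) → (Fin n → Bool)} (hf : Cotransverse f)
    (x : Fin n → unitInterval) (t : unitInterval) (ht : 0 < t) (i : Fin n) :
    t ≤ Tmap f x i ↔ f (fun k => if t ≤ x k then true else false) i = true := by
  classical
  set χ : Fin n → Bool := fun k => if t ≤ x k then true else false with hχ
  constructor
  · intro h
    set g : (Fin n → Bool) → unitInterval :=
      fun ε => ⨆ (_ : f ε i = true), ⨅ (k : Fin n), ⨅ (_ : ε k = true), x k with hg
    obtain ⟨ε₀, hε₀⟩ := Finite.exists_max g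
    have hT : Tmap f x i = g ε₀ := le_antisymm (iSup_le hε₀) (le_iSup g ε₀)
    by_cases hfi : f ε₀ i = true
    · have hgv : g ε₀ = ⨅ (k : Fin n), ⨅ (_ : ε₀ k = true), x k := by
        simp only [hg]
        exact iSup_pos hfi
      have htv : t ≤ ⨅ (k : Fin n), ⨅ (_ : ε₀ k = true), x k := by
        rw [hT, hgv] at h; exact h
      have hle : ε₀ ≤ χ := by
        intro k
        by_cases hk : ε₀ k = true
        · have h1 : (⨅ (k : Fin n), ⨅ (_ : ε₀ k = true), x k) ≤ x k :=
            (iInf_le _ k).trans (iInf_le _ hk)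
          have : t ≤ x k := htv.trans h1
          simp [hχ, hk, this]
        · have : ε₀ k = false := by cases hb : ε₀ k <;> simp_all
          rw [this]; exact Bool.false_le _
      have := hf.1.monotone hle i
      rw [hfi] at this
      exact le_antisymm (Bool.le_true _) this
    · exfalso
      have : g ε₀ = ⊥ := by
        simp only [hg]
        exact iSup_neg hfi
      rw [hT, this] at h
      exact absurd (le_antisymm (h.trans bot_le) ht.le) (ne_of_gt ht)
  · intro h
    have h1 : t ≤ ⨅ (k : Fin n), ⨅ (_ : χ k = true), x k := by
      refine le_iInf fun k => le_iInf fun hk => ?_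
      by_cases htx : t ≤ x k
      · exact htx
      · simp [hχ, htx] at hk
    calc t ≤ ⨅ (k : Fin n), ⨅ (_ : χ k = true), x k := h1
      _ ≤ Tmap f x i := le_iSup₂ (f := fun (ε : Fin n → Bool) (_ : f ε i = true) =>
          ⨅ (k : Fin n), ⨅ (_ : ε k = true), x k) χ h

open Classical in
lemma count_eq {n : ℕ} {f : (Fin n → Bool) → (Fin n → Bool)} (hf : Cotransverse f)
    (x : Fin n → unitInterval) (t : unitInterval) :
    (Finset.univ.filter fun i => t ≤ Tmap f x i).card
      = (Finset.univ.filter fun k => t ≤ x k).card := by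
  classical
  by_cases h0 : t = 0
  · subst h0
    have h1 : ∀ i, (0:unitInterval) ≤ Tmap f x i := fun i => (Tmap f x i).2.1
    have h2 : ∀ k, (0:unitInterval) ≤ x k := fun k => (x k).2.1
    rw [Finset.filter_true_of_mem fun i _ => h1 i, Finset.filter_true_of_mem fun k _ => h2 k]
  · have ht : 0 < t := lt_of_le_of_ne t.2.1 (by simpa [eq_comm] using h0)
    set χ : Fin n → Bool := fun k => if t ≤ x k then true else false with hχ
    have e1 : (Finset.univ.filter fun i => t ≤ Tmap f x i)
        = Finset.univ.filter fun i => f χ i = true := by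
      apply Finset.filter_congr
      intro i _
      simpa [hχ] using thresh hf x t ht i
    have e2 : (Finset.univ.filter fun k => χ k = true)
        = Finset.univ.filter fun k => t ≤ x k := by
      apply Finset.filter_congr
      intro k _
      by_cases htx : t ≤ x k <;> simp [hχ, htx]
    rw [e1]
    have := wt_f_eq_of_cot hf χ
    unfold wt at this
    rw [this, e2]

lemma monotone_count_eq {n : ℕ} (c d : Fin n → unitInterval)
    (hc : Monotone c) (hd : Monotone d)
    (h : ∀ t, (Finset.univ.filter fun i => t ≤ c i).card
        = (Finset.univ.filter fun i => t ≤ d i).card) : c = d := by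
  classical
  have key : ∀ (c : Fin n → unitInterval), Monotone c → ∀ (t : unitInterval) (j : Fin n),
      t ≤ c j ↔ n - (j:ℕ) ≤ (Finset.univ.filter fun i => t ≤ c i).card := by
    intro c hc t j
    constructor
    · intro htj
      have hsub : Finset.Ici j ⊆ Finset.univ.filter fun i => t ≤ c i := by
        intro i hi
        rw [Finset.mem_Ici] at hi
        exact Finset.mem_filter.mpr ⟨Finset.mem_univ i, htj.trans (hc hi)⟩
      calc n - (j:ℕ) = (Finset.Ici j).card := (Fin.card_Ici j).symm
        _ ≤ _ := Finset.card_le_card hsub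
    · intro hcard
      by_contra htj
      have hlt : c j < t := lt_of_not_ge htj
      have hsub : (Finset.univ.filter fun i => t ≤ c i) ⊆ Finset.Ioi j := by
        intro i hi
        rw [Finset.mem_Ioi]
        have hti := (Finset.mem_filter.mp hi).2
        by_contra hij
        exact absurd (hti.trans (hc (le_of_not_gt hij))) (not_le_of_gt hlt)
      have h1 : (Finset.univ.filter fun i => t ≤ c i).card ≤ n - 1 - (j:ℕ) := by
        calc _ ≤ (Finset.Ioi j).card := Finset.card_le_card hsub
          _ = n - 1 - (j:ℕ) := Fin.card_Ioi j
      have hj : (j:ℕ) < n := j.2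
      omega
  funext j
  have h1 : ∀ t, t ≤ c j ↔ t ≤ d j := by
    intro t
    rw [key c hc t j, key d hd t j, h t]
  exact le_antisymm ((h1 (c j)).mp le_rfl) ((h1 (d j)).mpr le_rfl)

lemma perm_count {n : ℕ} (a : Fin n → unitInterval) (σ : Equiv.Perm (Fin n))
    (t : unitInterval) :
    (Finset.univ.filter fun i => t ≤ a (σ i)).card
      = (Finset.univ.filter fun i => t ≤ a i).card := by
  classical
  apply Finset.card_bij (fun i _ => σ i)
  · intro i hi
    exact Finset.mem_filter.mpr ⟨Finset.mem_univ _, (Finset.mem_filter.mp hi).2⟩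
  · intro i _ j _ hij
    exact σ.injective hij
  · intro b hb
    refine ⟨σ.symm b, Finset.mem_filter.mpr ⟨Finset.mem_univ _, ?_⟩, by simp⟩
    rw [σ.apply_symm_apply]
    exact (Finset.mem_filter.mp hb).2

/-- For a cotransverse map `f : [n] → [n]` and every `x ∈ [0,1]^n`, the point
`T(f)(x)` is a rearrangement of the coordinates of `x`. -/
theorem stmt6 (n : ℕ) (f : (Fin n → Bool) → (Fin n → Bool))
    (hf : Cotransverse f) :
    ∀ x : Fin n → unitInterval, ∃ τ : Equiv.Perm (Fin n),
      ∀ i : Fin n, Tmap f x i = x (τ i) := by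
  classical
  intro x
  set a : Fin n → unitInterval := Tmap f x with ha
  set σ₁ : Equiv.Perm (Fin n) := Tuple.sort a with hσ₁
  set σ₂ : Equiv.Perm (Fin n) := Tuple.sort x with hσ₂
  have h1 : Monotone (a ∘ σ₁) := Tuple.monotone_sort a
  have h2 : Monotone (x ∘ σ₂) := Tuple.monotone_sort x
  have heq : a ∘ σ₁ = x ∘ σ₂ := by
    apply monotone_count_eq _ _ h1 h2
    intro t
    have e1 : (Finset.univ.filter fun i => t ≤ (a ∘ σ₁) i).card
        = (Finset.univ.filter fun i => t ≤ a i).card := perm_count a σ₁ t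
    have e2 : (Finset.univ.filter fun i => t ≤ (x ∘ σ₂) i).card
        = (Finset.univ.filter fun i => t ≤ x i).card := perm_count x σ₂ t
    rw [e1, e2, ha]
    exact count_eq hf x t
  refine ⟨σ₁.symm.trans σ₂, fun i => ?_⟩
  have h3 := congrFun heq (σ₁.symm i)
  simp only [Function.comp_apply, Equiv.apply_symm_apply] at h3
  rw [Equiv.trans_apply]
  exact h3
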